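/- Simon-type monotonicity inequality for p ≥ 2: if p ≥ 2, then for all u, v ∈ ℝ^N one has ⟨F(u) − F(v), u − v⟩ ≥ 4^{1−p} · c · |u − v|^p. -/

import Mathlib

open Real

lemma two_rpow_ge' (q : ℝ) (hq : 1 ≤ q) : q ≤ (2:ℝ) ^ q := by
  have h := one_add_mul_self_le_rpow_one_add (by norm_num : (-1:ℝ) ≤ 1) hq
  norm_num at h
  linarith

lemma rpow_superadd' {x y q : ℝ} (hx : 0 ≤ x) (hy : 0 ≤ y) (hq : 1 ≤ q) :
    x ^ q + y ^ q ≤ (x + y) ^ q := by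
  rcases eq_or_lt_of_le (by linarith : (0:ℝ) ≤ x + y) with h | h
  · have hx0 : x = 0 := by linarith
    have hy0 : y = 0 := by linarith
    simp [hx0, hy0, Real.zero_rpow (by linarith : q ≠ 0)]
  · have hq0 : 0 < q := by linarith
    have key : ∀ a : ℝ, 0 ≤ a → a ≤ 1 → a ^ q ≤ a := by
      intro a ha ha1
      rcases eq_or_lt_of_le ha with h0 | h0
      · simp [← h0, Real.zero_rpow hq0.ne']
      · calc a ^ q ≤ a ^ (1:ℝ) := Real.rpow_le_rpow_of_exponent_ge h0 ha1 hq
          _ = a := Real.rpow_one a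
    have h1 := key (x/(x+y)) (by positivity) (by rw [div_le_one h]; linarith)
    have h2 := key (y/(x+y)) (by positivity) (by rw [div_le_one h]; linarith)
    have e1 : (x/(x+y)) ^ q = x ^ q / (x+y) ^ q := Real.div_rpow hx (by linarith) q
    have e2 : (y/(x+y)) ^ q = y ^ q / (x+y) ^ q := Real.div_rpow hy (by linarith) q
    rw [e1] at h1; rw [e2] at h2
    have hpos : (0:ℝ) < (x+y) ^ q := Real.rpow_pos_of_pos h q
    have h3 := add_le_add h1 h2
    rw [← add_div, div_le_iff₀ hpos] at h3
    have h4 : x / (x + y) + y / (x + y) = 1 := by field_simp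
    rw [h4, one_mul] at h3
    exact h3

lemma K_hasDerivAt' (q : ℝ) (hq : 1 ≤ q) (s : ℝ) :
    HasDerivAt (fun s : ℝ => s * |s| ^ (q - 1)) (q * |s| ^ (q - 1)) s := by
  rcases lt_trichotomy s 0 with hs | hs | hs
  · have hne : (-s : ℝ) ≠ 0 := by linarith
    have hd : HasDerivAt (fun x : ℝ => -((-x) ^ q)) (q * (-s) ^ (q - 1)) s := by
      have h1 : HasDerivAt (fun x : ℝ => (-x) ^ q) (q * (-s) ^ (q - 1) * (-1)) s :=
        (Real.hasDerivAt_rpow_const (Or.inl hne)).comp s (hasDerivAt_neg s)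
      have h1n := h1.neg
      simp only [mul_neg, mul_one, neg_neg] at h1n
      exact h1n
    have heq : (fun x : ℝ => x * |x| ^ (q - 1)) =ᶠ[nhds s] fun x : ℝ => -((-x) ^ q) := by
      filter_upwards [Iio_mem_nhds hs] with x hx
      have hx0 : x < 0 := hx
      have e : (-x:ℝ) ^ q = (-x) ^ (q-1) * (-x) := by
        rw [← Real.rpow_add_one (by linarith : (-x:ℝ) ≠ 0) (q-1)]; ring_nf
      rw [abs_of_neg hx0, e]; ring
    have := hd.congr_of_eventuallyEq heq
    simpa [abs_of_neg hs] using this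
  · subst hs
    rcases eq_or_lt_of_le hq with h1 | h1
    · have h2 : (fun s : ℝ => s * |s| ^ (q - 1)) = fun s : ℝ => s := by
        funext x; rw [← h1]; simp
      rw [h2, ← h1]
      simpa using hasDerivAt_id' (0:ℝ)
    · have hq1 : 0 < q - 1 := by linarith
      rw [hasDerivAt_iff_tendsto_slope]
      have hval : q * |(0:ℝ)| ^ (q - 1) = 0 := by
        simp [Real.zero_rpow hq1.ne']
      rw [hval]
      have habs : Filter.Tendsto (fun x : ℝ => |x| ^ (q-1)) (nhds 0) (nhds 0) := by
        have hc : ContinuousAt (fun x : ℝ => |x| ^ (q-1)) 0 :=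
          (Real.continuousAt_rpow_const _ _ (Or.inr hq1.le)).comp continuous_abs.continuousAt
        simpa [Real.zero_rpow hq1.ne'] using hc.tendsto
      apply Filter.Tendsto.congr' _ (habs.mono_left nhdsWithin_le_nhds)
      filter_upwards [self_mem_nhdsWithin] with x hx
      have hx0 : (x:ℝ) ≠ 0 := hx
      simp only [slope_def_field]
      rw [eq_div_iff (by simpa using sub_ne_zero.mpr hx0 : x - 0 ≠ 0)]
      ring
  · have hne : s ≠ 0 := hs.ne'
    have hd : HasDerivAt (fun x : ℝ => x ^ q) (q * s ^ (q - 1)) s :=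
      Real.hasDerivAt_rpow_const (Or.inl hne)
    have heq : (fun x : ℝ => x * |x| ^ (q - 1)) =ᶠ[nhds s] fun x : ℝ => x ^ q := by
      filter_upwards [Ioi_mem_nhds hs] with x hx
      have hx0 : (0:ℝ) < x := hx
      have e : x ^ q = x ^ (q-1) * x := by
        rw [← Real.rpow_add_one hx0.ne' (q-1)]; ring_nf
      rw [abs_of_pos hx0, e]; ring
    have := hd.congr_of_eventuallyEq heq
    simpa [abs_of_pos hs] using this

lemma K_eq_rpow' {q : ℝ} (hq : 1 ≤ q) {s : ℝ} (hs : 0 ≤ s) : s * |s| ^ (q-1) = s ^ q := by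
  rcases eq_or_lt_of_le hs with h | h
  · rw [← h]; simp [Real.zero_rpow (by linarith : q ≠ 0)]
  · rw [abs_of_pos h, mul_comm, ← Real.rpow_add_one h.ne' (q-1)]
    norm_num

lemma K_neg' {q s : ℝ} : (-s) * |(-s)| ^ (q-1) = -(s * |s| ^ (q-1)) := by
  rw [abs_neg]; ring

lemma K_lb' (q : ℝ) (hq : 1 ≤ q) (b : ℝ) :
    (2:ℝ) ^ (-q) ≤ b * |b| ^ (q-1) - (b-1) * |b-1| ^ (q-1) := by
  have hq0 : (0:ℝ) < q := by linarith
  have h2q : (2:ℝ) ^ (-q) ≤ 1 :=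
    Real.rpow_le_one_of_one_le_of_nonpos one_le_two (by linarith)
  have hhalf : ∀ s : ℝ, 1/2 ≤ s → (2:ℝ) ^ (-q) ≤ s ^ q := by
    intro s hs
    have e : ((1:ℝ)/2) ^ q = (2:ℝ) ^ (-q) := by
      rw [Real.rpow_neg (by norm_num), ← Real.inv_rpow (by norm_num)]
      norm_num
    calc (2:ℝ) ^ (-q) = ((1:ℝ)/2) ^ q := e.symm
      _ ≤ s ^ q := Real.rpow_le_rpow (by norm_num) hs hq0.le
  rcases le_or_gt 1 b with hb | hb
  · rw [K_eq_rpow' hq (by linarith : (0:ℝ) ≤ b), K_eq_rpow' hq (by linarith : (0:ℝ) ≤ b - 1)]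
    have h5 := rpow_superadd' (by linarith : (0:ℝ) ≤ b - 1) (zero_le_one) hq
    rw [Real.one_rpow] at h5
    have e : b - 1 + 1 = b := by ring
    rw [e] at h5
    linarith
  rcases le_or_gt b 0 with hb0 | hb0
  · have e1 : b * |b| ^ (q-1) = -((-b) * |(-b)| ^ (q-1)) := by rw [K_neg']; ring
    have e2 : (b-1) * |b-1| ^ (q-1) = -((1-b) * |1-b| ^ (q-1)) := by
      rw [show (1:ℝ)-b = -(b-1) by ring, K_neg']; ring
    rw [e1, e2, K_eq_rpow' hq (by linarith : (0:ℝ) ≤ -b),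
      K_eq_rpow' hq (by linarith : (0:ℝ) ≤ 1-b)]
    have h5 := rpow_superadd' (by linarith : (0:ℝ) ≤ -b) (zero_le_one) hq
    rw [Real.one_rpow] at h5
    have e : -b + 1 = 1 - b := by ring
    rw [e] at h5
    linarith
  rcases le_or_gt (1/2 : ℝ) b with hb2 | hb2
  · have e2 : (b-1) * |b-1| ^ (q-1) = -((1-b) * |1-b| ^ (q-1)) := by
      rw [show (1:ℝ)-b = -(b-1) by ring, K_neg']; ring
    rw [K_eq_rpow' hq hb0.le, e2, K_eq_rpow' hq (by linarith : (0:ℝ) ≤ 1-b)]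
    have h1 := hhalf b hb2
    have h2 : (0:ℝ) ≤ (1-b) ^ q := Real.rpow_nonneg (by linarith) q
    linarith
  · have e2 : (b-1) * |b-1| ^ (q-1) = -((1-b) * |1-b| ^ (q-1)) := by
      rw [show (1:ℝ)-b = -(b-1) by ring, K_neg']; ring
    rw [K_eq_rpow' hq hb0.le, e2, K_eq_rpow' hq (by linarith : (0:ℝ) ≤ 1-b)]
    have h1 := hhalf (1-b) (by linarith)
    have h2 : (0:ℝ) ≤ b ^ q := Real.rpow_nonneg (by linarith) q
    linarith

set_option maxHeartbeats 2000000 in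
/-- Simon-type monotonicity inequality for `p ≥ 2`. -/
theorem simon_inequality_p_ge_two {N : ℕ} (hN : 1 ≤ N) (p c : ℝ)
    (hp : 1 < p) (hc : 0 < c) (φ φ' : ℝ → ℝ)
    (hderiv : ∀ ξ > (0 : ℝ), HasDerivAt φ (φ' ξ) ξ)
    (hderivcont : ContinuousOn φ' (Set.Ioi 0))
    (hφ : ∀ ξ > (0 : ℝ), c * ξ ^ (p - 2) ≤ φ ξ)
    (hφ' : ∀ ξ > (0 : ℝ), c * ξ ^ (p - 2) ≤ φ ξ + ξ * φ' ξ)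
    (F : EuclideanSpace ℝ (Fin N) → EuclideanSpace ℝ (Fin N))
    (hF : ∀ v : EuclideanSpace ℝ (Fin N), v ≠ 0 → F v = φ ‖v‖ • v) (hF0 : F 0 = 0)
    (hp2 : 2 ≤ p) :
    ∀ u v : EuclideanSpace ℝ (Fin N),
      (4 : ℝ) ^ (1 - p) * c * ‖u - v‖ ^ p ≤ (inner ℝ (F u - F v) (u - v) : ℝ) := by
  intro u v
  rcases eq_or_ne u v with rfl | huv
  · simp [Real.zero_rpow (by linarith : p ≠ 0)]
  have hd : u - v ≠ 0 := sub_ne_zero.mpr huv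
  set d := u - v with hd_def
  set n := ‖d‖ with hn_def
  have hn0 : 0 < n := norm_pos_iff.mpr hd
  have hnp : 0 < n ^ p := Real.rpow_pos_of_pos hn0 p
  have hq1 : (1:ℝ) ≤ p - 1 := by linarith
  have hp1 : p - 1 ≠ 0 := by linarith
  -- constants
  have hA : (0:ℝ) < (2:ℝ)^(-(p-1)) := Real.rpow_pos_of_pos two_pos _
  have hA1 : (2:ℝ)^(-(p-1)) ≤ 1 :=
    Real.rpow_le_one_of_one_le_of_nonpos one_le_two (by linarith)
  have hAB : (2:ℝ)^(-(p-1)) * (2:ℝ)^(p-1) = 1 := by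
    rw [← Real.rpow_add two_pos]; norm_num
  have h42 : (2:ℝ)^(2:ℝ) = 4 := by
    have := Real.rpow_natCast (2:ℝ) 2
    norm_num at this
    linarith
  have hfour : (4:ℝ)^(1-p) = (2:ℝ)^(-(p-1)) * (2:ℝ)^(-(p-1)) := by
    rw [← h42, ← Real.rpow_mul two_pos.le, ← Real.rpow_add two_pos]
    congr 1
    ring
  have h2le : (4:ℝ)^(1-p) ≤ (2:ℝ)^(-(p-1)) := by nlinarith
  have hhalf : ∀ s : ℝ, 1/2 ≤ s → (2:ℝ) ^ (-(p-1)) ≤ s ^ (p-1) := by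
    intro s hs
    have e : ((1:ℝ)/2) ^ (p-1) = (2:ℝ) ^ (-(p-1)) := by
      rw [Real.rpow_neg (by norm_num), ← Real.inv_rpow (by norm_num)]
      norm_num
    calc (2:ℝ) ^ (-(p-1)) = ((1:ℝ)/2) ^ (p-1) := e.symm
      _ ≤ s ^ (p-1) := Real.rpow_le_rpow (by norm_num) hs (by linarith)
  -- product decomposition used repeatedly
  have hfact : ∀ a : ℝ, 0 < a → (a*n)^(p-2) * (a * n^2) = a^(p-1) * n^p := by
    intro a ha
    have e1 : (a*n)^(p-2) = a^(p-2) * n^(p-2) := Real.mul_rpow ha.le hn0.le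
    have e2 : a^(p-2) * a = a^(p-1) := by
      rw [← Real.rpow_add_one ha.ne' (p-2)]; congr 1; ring
    have e3 : n^(p-2) * n^2 = n^p := by
      rw [← Real.rpow_natCast n 2, ← Real.rpow_add hn0]; congr 1; push_cast; ring
    calc (a*n)^(p-2) * (a*n^2) = (a^(p-2)*a) * (n^(p-2)*n^2) := by rw [e1]; ring
      _ = a^(p-1) * n^p := by rw [e2, e3]
  have key : ∀ a : ℝ, 0 < a → c * (a^(p-1) * n^p) ≤ (inner ℝ (F (a • d)) d : ℝ) := by
    intro a ha
    have hne : a • d ≠ 0 := smul_ne_zero ha.ne' hd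
    rw [hF _ hne, real_inner_smul_left]
    have hnorm : ‖a • d‖ = a * n := by
      rw [norm_smul, Real.norm_eq_abs, abs_of_pos ha]
    have hinner : (inner ℝ (a • d) d : ℝ) = a * n^2 := by
      rw [real_inner_smul_left, real_inner_self_eq_norm_sq]
    rw [hnorm, hinner]
    have hb := hφ (a*n) (by positivity)
    have h1 := mul_le_mul_of_nonneg_right hb (by positivity : (0:ℝ) ≤ a * n^2)
    calc c * (a^(p-1) * n^p) = c * ((a*n)^(p-2) * (a*n^2)) := by rw [hfact a ha]
      _ = c * (a*n)^(p-2) * (a*n^2) := by ring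
      _ ≤ φ (a*n) * (a*n^2) := h1
  have keyneg : ∀ b : ℝ, 0 < b →
      (inner ℝ (F ((-b) • d)) d : ℝ) ≤ -(c * (b^(p-1) * n^p)) := by
    intro b hb
    have hne : (-b) • d ≠ 0 := smul_ne_zero (by simpa using hb.ne') hd
    rw [hF _ hne, real_inner_smul_left]
    have hnorm : ‖(-b) • d‖ = b * n := by
      rw [norm_smul, Real.norm_eq_abs, abs_neg, abs_of_pos hb]
    have hinner : (inner ℝ ((-b) • d) d : ℝ) = -(b * n^2) := by
      rw [real_inner_smul_left, real_inner_self_eq_norm_sq]; ring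
    rw [hnorm, hinner]
    have hb' := hφ (b*n) (by positivity)
    have h1 := mul_le_mul_of_nonneg_right hb' (by positivity : (0:ℝ) ≤ b * n^2)
    have h2 : c * (b^(p-1) * n^p) ≤ φ (b*n) * (b*n^2) := by
      calc c * (b^(p-1) * n^p) = c * ((b*n)^(p-2) * (b*n^2)) := by rw [hfact b hb]
        _ = c * (b*n)^(p-2) * (b*n^2) := by ring
        _ ≤ φ (b*n) * (b*n^2) := h1
    linarith
  by_cases hzero : ∃ t ∈ Set.Icc (0:ℝ) 1, v + t • d = 0
  · obtain ⟨t₀, ht₀, hw0⟩ := hzero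
    have hv : v = (-t₀) • d := by
      rw [neg_smul]
      exact eq_neg_of_add_eq_zero_left hw0
    have hu : u = (1 - t₀) • d := by
      have h' : u = v + d := by rw [hd_def]; abel
      rw [h', hv, sub_smul, one_smul, neg_smul]; abel
    rw [inner_sub_left]
    have hcn : (0:ℝ) < c * n ^ p := by positivity
    rcases eq_or_lt_of_le ht₀.1 with h0 | h0
    · have hv0 : v = 0 := by rw [hv, ← h0]; simp
      have hu1 : u = (1:ℝ) • d := by rw [hu, ← h0]; norm_num
      have h1 := key 1 one_pos
      rw [← hu1, Real.one_rpow, one_mul] at h1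
      rw [hv0, hF0]
      simp only [inner_zero_left, sub_zero]
      have hint := mul_le_mul_of_nonneg_right (h2le.trans hA1) hcn.le
      linarith
    rcases eq_or_lt_of_le ht₀.2 with h1 | h1
    · have hu0 : u = 0 := by rw [hu, h1]; simp
      have hv1 : v = (-(1:ℝ)) • d := by rw [hv, h1]
      have h2 := keyneg 1 one_pos
      rw [← hv1, Real.one_rpow, one_mul] at h2
      rw [hu0, hF0]
      simp only [inner_zero_left, zero_sub]
      have hint := mul_le_mul_of_nonneg_right (h2le.trans hA1) hcn.le
      linarith
    · have ha := key (1 - t₀) (by linarith)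
      rw [← hu] at ha
      have hb := keyneg t₀ h0
      rw [← hv] at hb
      have hmax : (2:ℝ)^(-(p-1)) ≤ (1-t₀)^(p-1) + t₀^(p-1) := by
        rcases le_or_gt (1/2) t₀ with h | h
        · have h3 := hhalf t₀ h
          have h4 : (0:ℝ) ≤ (1-t₀)^(p-1) := Real.rpow_nonneg (by linarith) _
          linarith
        · have h3 := hhalf (1-t₀) (by linarith)
          have h4 : (0:ℝ) ≤ t₀^(p-1) := Real.rpow_nonneg (by linarith) _
          linarith
      have hint1 := mul_le_mul_of_nonneg_left hmax hcn.le
      have hint2 := mul_le_mul_of_nonneg_right h2le hcn.le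
      have e : c*n^p * ((1-t₀)^(p-1) + t₀^(p-1))
          = c*((1-t₀)^(p-1)*n^p) + c*(t₀^(p-1)*n^p) := by ring
      linarith
  · push_neg at hzero
    set S : ℝ := (inner ℝ v d : ℝ) with hS_def
    set t₁ : ℝ := -S / n^2 with ht₁_def
    set Q : ℝ → ℝ := fun t => ‖v‖^2 + 2*S*t + n^2*t^2 with hQ_def
    set r : ℝ → ℝ := fun t => Real.sqrt (Q t) with hr_def
    have hQnorm : ∀ t : ℝ, Q t = ‖v + t • d‖^2 := by
      intro t
      simp only [hQ_def, hS_def, hn_def]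
      symm
      rw [norm_add_sq_real, real_inner_smul_right, norm_smul]
      simp [Real.norm_eq_abs, mul_pow, sq_abs]
      ring
    have hrnorm : ∀ t : ℝ, r t = ‖v + t • d‖ := by
      intro t
      simp only [hr_def]
      rw [hQnorm t, Real.sqrt_sq (norm_nonneg _)]
    have hrpos : ∀ t ∈ Set.Icc (0:ℝ) 1, 0 < r t := by
      intro t ht; rw [hrnorm t]; exact norm_pos_iff.mpr (hzero t ht)
    have hQne : ∀ t ∈ Set.Icc (0:ℝ) 1, Q t ≠ 0 := by
      intro t ht; rw [hQnorm t]
      exact pow_ne_zero 2 (norm_ne_zero_iff.mpr (hzero t ht))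
    have hCS : S^2 ≤ ‖v‖^2 * n^2 := by
      have h := abs_real_inner_le_norm v d
      rw [← hS_def, ← hn_def] at h
      nlinarith [mul_self_le_mul_self (abs_nonneg S) h, sq_abs S]
    have hlow : ∀ t : ℝ, |t - t₁| * n ≤ r t := by
      intro t
      have hn2 : (n:ℝ)^2 ≠ 0 := by positivity
      have hnn : S^2/n^2 ≤ ‖v‖^2 := by
        rw [div_le_iff₀ (by positivity : (0:ℝ) < n^2)]
        exact hCS
      have h1 : (|t - t₁| * n)^2 ≤ Q t := by
        have hexp : (|t - t₁| * n)^2 = Q t - (‖v‖^2 - S^2/n^2) := by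
          simp only [hQ_def]
          rw [mul_pow, sq_abs, ht₁_def]
          field_simp
          ring
        rw [hexp]
        have : 0 ≤ ‖v‖^2 - S^2/n^2 := by linarith
        linarith
      calc |t - t₁| * n = Real.sqrt ((|t - t₁| * n)^2) :=
            (Real.sqrt_sq (by positivity)).symm
        _ ≤ Real.sqrt (Q t) := Real.sqrt_le_sqrt h1
        _ = r t := by simp only [hr_def]
    have hQ' : ∀ t : ℝ, HasDerivAt Q (2*S + n^2*(2*t)) t := by
      intro t
      rw [hQ_def]
      have h1 : HasDerivAt (fun t:ℝ => t) 1 t := hasDerivAt_id t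
      have h2 : HasDerivAt (fun t:ℝ => t^2) (2*t) t := by simpa using hasDerivAt_pow 2 t
      have h3 := (((h1.const_mul (2*S))).const_add (‖v‖^2)).add (h2.const_mul (n^2))
      simp only [mul_one] at h3
      exact h3
    have hr' : ∀ t ∈ Set.Icc (0:ℝ) 1, HasDerivAt r ((S + n^2*t)/ r t) t := by
      intro t ht
      have h1 := (hQ' t).sqrt (hQne t ht)
      have e : (2*S + n^2*(2*t)) / (2 * Real.sqrt (Q t)) = (S + n^2*t)/ r t := by
        have hrne : r t ≠ 0 := (hrpos t ht).ne'
        have : Real.sqrt (Q t) = r t := by simp only [hr_def]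
        rw [this]
        field_simp
      rw [hr_def]
      rw [← e]
      exact h1
    have hlin : ∀ t : ℝ, HasDerivAt (fun t : ℝ => S + t * n^2) (n^2) t := by
      intro t
      simpa using ((hasDerivAt_id t).mul_const (n^2)).const_add S
    set g : ℝ → ℝ := fun t => φ (r t) * (S + t * n^2) with hg_def
    have hg' : ∀ t ∈ Set.Icc (0:ℝ) 1,
        HasDerivAt g (φ' (r t) * ((S + n^2*t)/r t) * (S + t*n^2) + φ (r t) * n^2) t := by
      intro t ht
      rw [hg_def]
      have hcomp := (hderiv (r t) (hrpos t ht)).comp t (hr' t ht)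
      have := hcomp.mul (hlin t)
      exact this
    have hg_val : ∀ t ∈ Set.Icc (0:ℝ) 1, g t = (inner ℝ (F (v + t • d)) d : ℝ) := by
      intro t ht
      simp only [hg_def]
      rw [hF _ (hzero t ht), real_inner_smul_left, hrnorm t]
      congr 1
      rw [inner_add_left, real_inner_smul_left, real_inner_self_eq_norm_sq,
        ← hS_def, ← hn_def]
    have e3 : n^(p-2) * n^2 = n^p := by
      rw [← Real.rpow_natCast n 2, ← Real.rpow_add hn0]; congr 1; push_cast; ring
    have hDlow : ∀ t ∈ Set.Icc (0:ℝ) 1,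
        c * n^p * |t - t₁|^(p-2) ≤
          φ' (r t) * ((S + n^2*t)/r t) * (S + t*n^2) + φ (r t) * n^2 := by
      intro t ht
      have hρ := hrpos t ht
      have hσeq : S + n^2*t = (inner ℝ (v + t • d) d : ℝ) := by
        rw [inner_add_left, real_inner_smul_left, real_inner_self_eq_norm_sq,
          ← hS_def, ← hn_def]
        ring
      have hσle : (S + n^2*t)^2 ≤ (r t)^2 * n^2 := by
        have h := abs_real_inner_le_norm (v + t • d) d
        rw [← hσeq, ← hn_def, ← hrnorm t] at h
        nlinarith [mul_self_le_mul_self (abs_nonneg (S + n^2*t)) h,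
          sq_abs (S + n^2*t), hρ, hn0]
      have hσ' : S + t*n^2 = S + n^2*t := by ring
      have step1 : c * (r t)^(p-2) * n^2 ≤
          φ' (r t) * ((S + n^2*t)/r t) * (S + t*n^2) + φ (r t) * n^2 := by
        rw [hσ', show φ' (r t) * ((S + n^2*t)/r t) * (S + n^2*t)
            = φ' (r t) * ((S + n^2*t)^2/r t) from by ring]
        rcases le_or_gt 0 (φ' (r t)) with hpos | hneg
        · have h1 : 0 ≤ φ' (r t) * ((S + n^2*t)^2/r t) := by positivity
          have h2 := mul_le_mul_of_nonneg_right (hφ (r t) hρ) (sq_nonneg n)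
          linarith
        · have hdiv : (S + n^2*t)^2/(r t) ≤ (r t) * n^2 := by
            rw [div_le_iff₀ hρ]
            nlinarith
          have h2 := mul_le_mul_of_nonpos_left hdiv hneg.le
          have h3 := mul_le_mul_of_nonneg_right (hφ' (r t) hρ) (sq_nonneg n)
          nlinarith
      have hmono2 : (|t-t₁| * n)^(p-2) ≤ (r t)^(p-2) :=
        Real.rpow_le_rpow (by positivity) (hlow t) (by linarith)
      have hsplit : (|t-t₁| * n)^(p-2) = |t-t₁|^(p-2) * n^(p-2) :=
        Real.mul_rpow (abs_nonneg _) hn0.le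
      rw [hsplit] at hmono2
      have h4 := mul_le_mul_of_nonneg_right
        (mul_le_mul_of_nonneg_left hmono2 hc.le) (sq_nonneg n)
      have e5 : c * n^p * |t-t₁|^(p-2) = c * (|t-t₁|^(p-2) * n^(p-2)) * n^2 := by
        rw [← e3]; ring
      linarith [step1, h4]
    have hK' : ∀ t : ℝ, HasDerivAt (fun t : ℝ => (t - t₁) * |t - t₁| ^ (p-2))
        ((p-1) * |t - t₁|^(p-2)) t := by
      intro t
      have h1 := (K_hasDerivAt' (p-1) hq1 (t - t₁)).comp t ((hasDerivAt_id t).sub_const t₁)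
      rw [show p - 1 - 1 = p - 2 from by ring, mul_one] at h1
      exact h1
    set f : ℝ → ℝ := fun t => g t - (c * n^p / (p-1)) * ((t - t₁) * |t - t₁| ^ (p-2))
      with hf_def
    have hf' : ∀ t ∈ Set.Icc (0:ℝ) 1, HasDerivAt f
        ((φ' (r t) * ((S + n^2*t)/r t) * (S + t*n^2) + φ (r t) * n^2)
          - c * n^p * |t - t₁|^(p-2)) t := by
      intro t ht
      rw [hf_def]
      have h1 := (hg' t ht).sub ((hK' t).const_mul (c * n^p / (p-1)))
      have e : c * n^p / (p-1) * ((p-1) * |t - t₁|^(p-2)) = c * n^p * |t - t₁|^(p-2) := by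
        field_simp
      rw [e] at h1
      exact h1
    have hmonof : MonotoneOn f (Set.Icc 0 1) := by
      apply monotoneOn_of_deriv_nonneg (convex_Icc 0 1)
      · exact fun t ht => (hf' t ht).continuousAt.continuousWithinAt
      · rw [interior_Icc]
        exact fun t ht =>
          ((hf' t (Set.Ioo_subset_Icc_self ht)).differentiableAt).differentiableWithinAt
      · rw [interior_Icc]
        intro t ht
        rw [(hf' t (Set.Ioo_subset_Icc_self ht)).deriv]
        have := hDlow t (Set.Ioo_subset_Icc_self ht)
        linarith
    have h01 := hmonof (Set.left_mem_Icc.mpr zero_le_one)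
      (Set.right_mem_Icc.mpr zero_le_one) zero_le_one
    simp only [hf_def] at h01
    have hg0 : g 0 = (inner ℝ (F v) d : ℝ) := by
      have h2 := hg_val 0 (by norm_num)
      simpa using h2
    have hg1 : g 1 = (inner ℝ (F u) d : ℝ) := by
      have h2 := hg_val 1 (Set.right_mem_Icc.mpr zero_le_one)
      have e : v + (1:ℝ) • d = u := by rw [one_smul, hd_def]; abel
      rw [e] at h2
      exact h2
    have hC : (0:ℝ) < c * n^p / (p-1) := div_pos (by positivity) (by linarith)
    have hKlb := K_lb' (p-1) hq1 (1 - t₁)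
    have hKlb' : (2:ℝ)^(-(p-1)) ≤
        (1-t₁)*|1-t₁|^(p-2) - (0-t₁)*|0-t₁|^(p-2) := by
      have e1 : p-1-1 = p-2 := by ring
      have e2 : (1-t₁)-1 = 0-t₁ := by ring
      rw [e1, e2] at hKlb
      exact hKlb
    have hstep := mul_le_mul_of_nonneg_left hKlb' hC.le
    have hb2 := mul_le_mul_of_nonneg_left (two_rpow_ge' (p-1) hq1) (mul_pos hA hA).le
    have eAB : (2:ℝ)^(-(p-1)) * (2:ℝ)^(-(p-1)) * (2:ℝ)^(p-1) = 2^(-(p-1)) := by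
      rw [mul_assoc, hAB, mul_one]
    have hfin : (4:ℝ)^(1-p) * (p-1) ≤ 2^(-(p-1)) := by
      rw [hfour]
      linarith
    have h5 := mul_le_mul_of_nonneg_left hfin hC.le
    have e6 : c*n^p/(p-1) * ((4:ℝ)^(1-p)*(p-1)) = (4:ℝ)^(1-p)*c*n^p := by
      field_simp
    rw [inner_sub_left, ← hg1, ← hg0]
    nlinarith [h01, hstep, h5]
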